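/- Let k ≥ 2 and let F be a k-uniform, (k+1)-regular linear hypergraph on k² vertices arising from an affine plane of order k, in which every two distinct intersecting edges e, e' have the property that every edge of F intersects e or e'. If τ(F) = 2k−1, then for every edge e of F and every nonempty subset X of the vertices of e, the hypergraph F(X) obtained by deleting X and all edges meeting X satisfies τ(F(X)) = 2k−1−|X|. -/

import Mathlib

structure FinHypergraph (α : Type) where
  verts : Finset α
  edges : Finset (Finset α)
deriving DecidableEq

namespace FinHypergraph

variable {α : Type} [DecidableEq α]

/-- All edges are subsets of the vertex set. -/
def Wellformed (H : FinHypergraph α) : Prop := ∀ e ∈ H.edges, e ⊆ H.verts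

/-- Every edge has exactly `k` vertices. -/
def Uniform (H : FinHypergraph α) (k : ℕ) : Prop := ∀ e ∈ H.edges, e.card = k

/-- Any two distinct edges intersect in at most one vertex. -/
def Linear (H : FinHypergraph α) : Prop :=
  ∀ e ∈ H.edges, ∀ f ∈ H.edges, e ≠ f → (e ∩ f).card ≤ 1

/-- `T` is a transversal: a set of vertices meeting every edge. -/
def IsTransversal (H : FinHypergraph α) (T : Finset α) : Prop :=
  T ⊆ H.verts ∧ ∀ e ∈ H.edges, (T ∩ e).Nonempty

/-- The transversal number: minimum size of a transversal. -/
noncomputable def tau (H : FinHypergraph α) : ℕ :=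
  sInf {n : ℕ | ∃ T : Finset α, H.IsTransversal T ∧ T.card = n}

/-- The degree of a vertex: the number of edges containing it. -/
def degree (H : FinHypergraph α) (v : α) : ℕ := (H.edges.filter (fun e => v ∈ e)).card

/-- Every vertex lies in exactly `r` edges. -/
def Regular (H : FinHypergraph α) (r : ℕ) : Prop := ∀ v ∈ H.verts, H.degree v = r

/-- Delete a set `X` of vertices together with all edges meeting `X`. -/
def delete (H : FinHypergraph α) (X : Finset α) : FinHypergraph α :=
  ⟨H.verts \ X, H.edges.filter (fun e => ∀ x ∈ X, x ∉ e)⟩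

end FinHypergraph

/-- For `k ≥ 2`, let `F` be a `k`-uniform, `(k+1)`-regular linear hypergraph on `k²`
vertices such that for any two distinct intersecting edges `e, e'`, every edge of `F`
meets `e ∪ e'` (the affine-plane property). If `τ(F) = 2k−1`, then for every edge `e`
of `F` and every nonempty `X ⊆ e`, deleting `X` and all edges meeting `X` gives a
hypergraph with transversal number `2k−1−|X|`. -/
theorem stmt7 {α : Type} [DecidableEq α] (k : ℕ) (hk : 2 ≤ k) (F : FinHypergraph α)
    (hw : F.Wellformed) (hu : F.Uniform k) (hreg : F.Regular (k + 1))
    (hn : F.verts.card = k ^ 2) (hl : F.Linear)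
    (haff : ∀ e ∈ F.edges, ∀ e' ∈ F.edges, e ≠ e' → (e ∩ e').Nonempty →
      ∀ f ∈ F.edges, (f ∩ (e ∪ e')).Nonempty)
    (htau : F.tau = 2 * k - 1) :
    ∀ e ∈ F.edges, ∀ X : Finset α, X ⊆ e → X.Nonempty →
      (F.delete X).tau = 2 * k - 1 - X.card := by

  intro e he X hXe hXne
  obtain ⟨v, hvX⟩ := hXne
  have hve : v ∈ e := hXe hvX
  have hvverts : v ∈ F.verts := hw e he hve
  have hdeg := hreg v hvverts
  have hcard_e : e.card = k := hu e he
  have hXcard : X.card ≤ k := by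
    have := Finset.card_le_card hXe; omega
  -- find a second edge e' through v
  have hmem : e ∈ F.edges.filter (fun f => v ∈ f) := by
    simp [he, hve]
  have hgt : 1 < (F.edges.filter (fun f => v ∈ f)).card := by
    unfold FinHypergraph.degree at hdeg; omega
  obtain ⟨e', he'mem, hne'⟩ := Finset.exists_mem_ne hgt e
  have he' : e' ∈ F.edges := (Finset.mem_filter.1 he'mem).1
  have hve' : v ∈ e' := (Finset.mem_filter.1 he'mem).2
  have hcard_e' : e'.card = k := hu e' he'
  -- the candidate transversal of F.delete X
  set T₀ : Finset α := (e ∪ e') \ X with hT₀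
  have hXsub : X ⊆ e ∪ e' := hXe.trans Finset.subset_union_left
  have hT₀card : T₀.card ≤ 2 * k - 1 - X.card := by
    have h1 : T₀.card = (e ∪ e').card - X.card := Finset.card_sdiff_of_subset hXsub
    have h2 : (e ∪ e').card + (e ∩ e').card = e.card + e'.card :=
      Finset.card_union_add_card_inter e e'
    have h3 : 1 ≤ (e ∩ e').card := by
      apply Finset.card_pos.2
      exact ⟨v, Finset.mem_inter.2 ⟨hve, hve'⟩⟩
    omega
  have hT₀trans : (F.delete X).IsTransversal T₀ := by
    constructor
    · intro w hw'
      have hw2 := Finset.mem_sdiff.1 hw'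
      simp only [FinHypergraph.delete, Finset.mem_sdiff]
      refine ⟨?_, hw2.2⟩
      rcases Finset.mem_union.1 hw2.1 with h | h
      · exact hw e he h
      · exact hw e' he' h
    · intro f hf
      have hf2 := Finset.mem_filter.1 hf
      have hint : (f ∩ (e ∪ e')).Nonempty :=
        haff e he e' he' (Ne.symm hne') ⟨v, Finset.mem_inter.2 ⟨hve, hve'⟩⟩ f hf2.1
      obtain ⟨w, hwmem⟩ := hint
      have hwf : w ∈ f := (Finset.mem_inter.1 hwmem).1
      have hwu : w ∈ e ∪ e' := (Finset.mem_inter.1 hwmem).2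
      have hwX : w ∉ X := fun hx => hf2.2 w hx hwf
      exact ⟨w, Finset.mem_inter.2 ⟨Finset.mem_sdiff.2 ⟨hwu, hwX⟩, hwf⟩⟩
  -- the set defining tau of the deleted graph
  set S : Set ℕ := {n : ℕ | ∃ T : Finset α, (F.delete X).IsTransversal T ∧ T.card = n}
    with hS
  have hSne : S.Nonempty := ⟨T₀.card, T₀, hT₀trans, rfl⟩
  have hub : (F.delete X).tau ≤ 2 * k - 1 - X.card := by
    have := Nat.sInf_le (show T₀.card ∈ S from ⟨T₀, hT₀trans, rfl⟩)
    calc (F.delete X).tau ≤ T₀.card := this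
      _ ≤ _ := hT₀card
  -- lower bound
  have hlb : 2 * k - 1 - X.card ≤ (F.delete X).tau := by
    have hmemS : (F.delete X).tau ∈ S := Nat.sInf_mem hSne
    obtain ⟨T, hTtrans, hTcard⟩ := hmemS
    -- T ∪ X is a transversal of F
    have hTX : F.IsTransversal (T ∪ X) := by
      constructor
      · intro w hw'
        rcases Finset.mem_union.1 hw' with h | h
        · exact (Finset.mem_sdiff.1 (hTtrans.1 h)).1
        · exact hw e he (hXe h)
      · intro f hf
        by_cases hfX : ∀ x ∈ X, x ∉ f
        · have hf' : f ∈ (F.delete X).edges := Finset.mem_filter.2 ⟨hf, hfX⟩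
          obtain ⟨w, hwmem⟩ := hTtrans.2 f hf'
          exact ⟨w, Finset.mem_inter.2 ⟨Finset.mem_union_left _
            (Finset.mem_inter.1 hwmem).1, (Finset.mem_inter.1 hwmem).2⟩⟩
        · push_neg at hfX
          obtain ⟨x, hxX, hxf⟩ := hfX
          exact ⟨x, Finset.mem_inter.2 ⟨Finset.mem_union_right _ hxX, hxf⟩⟩
    have htauF : F.tau ≤ (T ∪ X).card := Nat.sInf_le ⟨T ∪ X, hTX, rfl⟩
    have hcu : (T ∪ X).card ≤ T.card + X.card := Finset.card_union_le T X
    omega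
  omega
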